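/- arXiv:2301.00040 — 2 statements merged into one kernel-verified Lean document; each statement's English description precedes it below -/
import Mathlib

section
/- Rigorous comparison point unconditional on the treatment (Equation (10)): let H be a real Hilbert space, V a complete subspace, b ≥ 0, and y, d, u, x ∈ H with all residuals appearing below nonzero and (1+b)·R²_{d∼x|V} < 1. Suppose R_{d∼u|V+span(x)} = √b·f_{d∼x|V} and R_{y∼u|V+span(x)} = √b·f_{y∼x|V} (i.e. u explains b times as much variation in d and in y as x does, given V, with matching signs). Then R_{y∼u|V+span(x)+span(d)} = √b·f_{y∼x|V+span(d)} / √(1 − (1+b)·R²_{d∼x|V}). -/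
/-!
R²-calculus in real Hilbert spaces (Freidling & Zhao, "Optimization-based
Sensitivity Analysis for Unmeasured Confounding using Partial Correlations").
-/

noncomputable section

open Submodule RealInnerProductSpace

variable {H : Type*} [NormedAddCommGroup H] [InnerProductSpace ℝ H]

/-- The residual `h^{⊥M} = h − P_M h` of `h` after projecting onto `M`. -/
def resid (M : Submodule ℝ H) [HasOrthogonalProjection M] (h : H) : H :=
  h - (orthogonalProjection M h : H)

/-- The marginal R²-value `R²_{y∼X} = 1 − ‖y^{⊥X}‖²/‖y‖²`. -/
def R2 (y : H) (X : Submodule ℝ H) [HasOrthogonalProjection X] : ℝ :=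
  1 - ‖resid X y‖ ^ 2 / ‖y‖ ^ 2

/-- The partial R²-value `R²_{y∼X|Z} = (R²_{y∼X+Z} − R²_{y∼Z})/(1 − R²_{y∼Z})`. -/
def R2p (y : H) (X Z : Submodule ℝ H) [HasOrthogonalProjection (X ⊔ Z)]
    [HasOrthogonalProjection Z] : ℝ :=
  (R2 y (X ⊔ Z) - R2 y Z) / (1 - R2 y Z)

/-- The partial R-value `R_{y∼x|Z} = ⟪y^{⊥Z}, x^{⊥Z}⟫/(‖y^{⊥Z}‖·‖x^{⊥Z}‖)`. -/
def Rp (y x : H) (Z : Submodule ℝ H) [HasOrthogonalProjection Z] : ℝ :=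
  ⟪resid Z y, resid Z x⟫ / (‖resid Z y‖ * ‖resid Z x‖)

/-- The partial f-value `f_{y∼x|Z} = R_{y∼x|Z}/√(1 − R²_{y∼x|Z})`. -/
def fp (y x : H) (Z : Submodule ℝ H) [HasOrthogonalProjection Z] : ℝ :=
  Rp y x Z / Real.sqrt (1 - Rp y x Z ^ 2)

/-- The regression estimand `β_{y∼d|M} = ⟪y^{⊥M}, d^{⊥M}⟫/‖d^{⊥M}‖²`. -/
def betaReg (y d : H) (M : Submodule ℝ H) [HasOrthogonalProjection M] : ℝ :=
  ⟪resid M y, resid M d⟫ / ‖resid M d‖ ^ 2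

/-- `σ_{y∼M} = ‖y^{⊥M}‖`. -/
def sigv (y : H) (M : Submodule ℝ H) [HasOrthogonalProjection M] : ℝ :=
  ‖resid M y‖

lemma inner_resid_right (Z : Submodule ℝ H) [HasOrthogonalProjection Z] (h : H)
    {v : H} (hv : v ∈ Z) : ⟪resid Z h, v⟫ = 0 := by
  have := sub_starProjection_mem_orthogonal (K := Z) h
  exact inner_eq_zero_symm.2 (this v hv)

lemma resid_sup (Z : Submodule ℝ H) [HasOrthogonalProjection Z] (x : H)
    [HasOrthogonalProjection (Z ⊔ (ℝ ∙ x))] (h : H) :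
    resid (Z ⊔ (ℝ ∙ x)) h =
      resid Z h - (⟪resid Z h, resid Z x⟫ / ‖resid Z x‖ ^ 2) • resid Z x := by
  set c : ℝ := ⟪resid Z h, resid Z x⟫ / ‖resid Z x‖ ^ 2 with hc
  have hxmem : resid Z x ∈ Z ⊔ (ℝ ∙ x) := by
    have h1 : x ∈ Z ⊔ (ℝ ∙ x) := le_sup_right (α := Submodule ℝ H) (mem_span_singleton_self x)
    have h2 : (orthogonalProjection Z x : H) ∈ Z ⊔ (ℝ ∙ x) :=
      le_sup_left (α := Submodule ℝ H) (orthogonalProjection Z x).2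
    exact Submodule.sub_mem _ h1 h2
  have hmem : (orthogonalProjection Z h : H) + c • resid Z x ∈ Z ⊔ (ℝ ∙ x) :=
    Submodule.add_mem _ (le_sup_left (α := Submodule ℝ H) (orthogonalProjection Z h).2)
      (Submodule.smul_mem _ _ hxmem)
  have key : (orthogonalProjection (Z ⊔ (ℝ ∙ x)) h : H) =
      (orthogonalProjection Z h : H) + c • resid Z x := by
    refine eq_starProjection_of_mem_of_inner_eq_zero hmem ?_
    intro w hw
    rcases Submodule.mem_sup.1 hw with ⟨v, hv, z, hz, rfl⟩
    rcases Submodule.mem_span_singleton.1 hz with ⟨t, rfl⟩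
    have hres : h - ((orthogonalProjection Z h : H) + c • resid Z x) =
        resid Z h - c • resid Z x := by
      simp [resid]; abel
    rw [hres]
    have hv0 : ⟪resid Z h - c • resid Z x, v⟫ = 0 := by
      rw [inner_sub_left, inner_smul_left]
      rw [inner_resid_right Z h hv, inner_resid_right Z x hv]
      ring
    have hproj : ∀ a g : H, ⟪resid Z g, a⟫ = ⟪resid Z g, resid Z a⟫ := by
      intro a g
      have : ⟪resid Z g, (orthogonalProjection Z a : H)⟫ = 0 :=
        inner_resid_right Z g (orthogonalProjection Z a).2
      simp only [resid] at this
      simp only [resid, inner_sub_right, this]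
      ring
    have hx0 : ⟪resid Z h - c • resid Z x, x⟫ = 0 := by
      rw [inner_sub_left, inner_smul_left, hproj x h, hproj x x,
        real_inner_self_eq_norm_sq]
      rcases eq_or_ne (resid Z x) 0 with h0 | h0
      · simp [h0, hc]
      · have : ‖resid Z x‖ ^ 2 ≠ 0 := pow_ne_zero _ (norm_ne_zero_iff.2 h0)
        simp only [RCLike.star_def, conj_trivial, hc]
        field_simp
        ring
    rw [inner_add_right, inner_smul_right, hv0, hx0]
    ring
  simp only [resid, key]
  abel

lemma Rp_symm (a b : H) (Z : Submodule ℝ H) [HasOrthogonalProjection Z] :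
    Rp a b Z = Rp b a Z := by
  unfold Rp; rw [real_inner_comm, mul_comm]

lemma inner_resid_sup (Z : Submodule ℝ H) [HasOrthogonalProjection Z] (x : H)
    [HasOrthogonalProjection (Z ⊔ (ℝ ∙ x))] (a b : H) (hx : resid Z x ≠ 0) :
    ⟪resid (Z ⊔ (ℝ ∙ x)) a, resid (Z ⊔ (ℝ ∙ x)) b⟫ =
      ⟪resid Z a, resid Z b⟫ -
        ⟪resid Z a, resid Z x⟫ * ⟪resid Z b, resid Z x⟫ / ‖resid Z x‖ ^ 2 := by
  have hx2 : ‖resid Z x‖ ^ 2 ≠ 0 := pow_ne_zero _ (norm_ne_zero_iff.2 hx)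
  rw [resid_sup, resid_sup, inner_sub_left, inner_sub_right, inner_sub_right,
    inner_smul_left, inner_smul_right, inner_smul_left, inner_smul_right,
    real_inner_self_eq_norm_sq]
  simp only [RCLike.star_def, conj_trivial]
  rw [real_inner_comm (resid Z x) (resid Z b)]
  field_simp
  ring

lemma norm_sq_resid_sup (Z : Submodule ℝ H) [HasOrthogonalProjection Z] (x : H)
    [HasOrthogonalProjection (Z ⊔ (ℝ ∙ x))] (a : H) (hx : resid Z x ≠ 0) :
    ‖resid (Z ⊔ (ℝ ∙ x)) a‖ ^ 2 =
      ‖resid Z a‖ ^ 2 - ⟪resid Z a, resid Z x⟫ ^ 2 / ‖resid Z x‖ ^ 2 := by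
  rw [← real_inner_self_eq_norm_sq, inner_resid_sup Z x a a hx,
    real_inner_self_eq_norm_sq]
  ring

lemma norm_resid_sup (Z : Submodule ℝ H) [HasOrthogonalProjection Z] (x : H)
    [HasOrthogonalProjection (Z ⊔ (ℝ ∙ x))] (a : H) (ha : resid Z a ≠ 0)
    (hx : resid Z x ≠ 0) :
    ‖resid (Z ⊔ (ℝ ∙ x)) a‖ = ‖resid Z a‖ * Real.sqrt (1 - Rp a x Z ^ 2) := by
  have ha2 : ‖resid Z a‖ ^ 2 ≠ 0 := pow_ne_zero _ (norm_ne_zero_iff.2 ha)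
  have hx2 : ‖resid Z x‖ ^ 2 ≠ 0 := pow_ne_zero _ (norm_ne_zero_iff.2 hx)
  have hsq : ‖resid (Z ⊔ (ℝ ∙ x)) a‖ ^ 2 = (‖resid Z a‖ * Real.sqrt (1 - Rp a x Z ^ 2)) ^ 2 := by
    have hnn : 0 ≤ 1 - Rp a x Z ^ 2 := by
      have h0 : 0 ≤ ‖resid (Z ⊔ (ℝ ∙ x)) a‖ ^ 2 := by positivity
      rw [norm_sq_resid_sup Z x a hx] at h0
      unfold Rp
      rw [div_pow, mul_pow]
      rw [sub_nonneg, div_le_one (by positivity)]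
      have cs := real_inner_mul_inner_self_le (resid Z a) (resid Z x)
      rw [real_inner_self_eq_norm_sq, real_inner_self_eq_norm_sq] at cs
      nlinarith [cs]
    rw [mul_pow, Real.sq_sqrt hnn, norm_sq_resid_sup Z x a hx]
    unfold Rp
    rw [div_pow, mul_pow]
    field_simp
  have h1 : 0 ≤ ‖resid (Z ⊔ (ℝ ∙ x)) a‖ := norm_nonneg _
  have h2 : 0 ≤ ‖resid Z a‖ * Real.sqrt (1 - Rp a x Z ^ 2) := by positivity
  nlinarith [hsq]

lemma one_sub_Rp_sq_pos (Z : Submodule ℝ H) [HasOrthogonalProjection Z] (x : H)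
    [HasOrthogonalProjection (Z ⊔ (ℝ ∙ x))] (a : H) (ha : resid Z a ≠ 0)
    (hx : resid Z x ≠ 0) (hsup : resid (Z ⊔ (ℝ ∙ x)) a ≠ 0) :
    0 < 1 - Rp a x Z ^ 2 := by
  have := norm_resid_sup Z x a ha hx
  have h0 : 0 < ‖resid (Z ⊔ (ℝ ∙ x)) a‖ := norm_pos_iff.2 hsup
  rw [this] at h0
  have : 0 < Real.sqrt (1 - Rp a x Z ^ 2) := by
    rcases lt_or_ge 0 (Real.sqrt (1 - Rp a x Z ^ 2)) with h | h
    · exact h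
    · exfalso; nlinarith [Real.sqrt_nonneg (1 - Rp a x Z ^ 2), norm_nonneg (resid Z a)]
  exact Real.sqrt_pos.1 this

lemma Rp_rec (Z : Submodule ℝ H) [HasOrthogonalProjection Z] (x : H)
    [HasOrthogonalProjection (Z ⊔ (ℝ ∙ x))] (a b : H) (ha : resid Z a ≠ 0)
    (hb : resid Z b ≠ 0) (hx : resid Z x ≠ 0)
    (hsa : 0 < 1 - Rp a x Z ^ 2) (hsb : 0 < 1 - Rp b x Z ^ 2) :
    Rp a b (Z ⊔ (ℝ ∙ x)) = (Rp a b Z - Rp a x Z * Rp b x Z) /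
      (Real.sqrt (1 - Rp a x Z ^ 2) * Real.sqrt (1 - Rp b x Z ^ 2)) := by
  have hna : ‖resid Z a‖ ≠ 0 := norm_ne_zero_iff.2 ha
  have hnb : ‖resid Z b‖ ≠ 0 := norm_ne_zero_iff.2 hb
  have hnx : ‖resid Z x‖ ≠ 0 := norm_ne_zero_iff.2 hx
  have hsa' : Real.sqrt (1 - Rp a x Z ^ 2) ≠ 0 := ne_of_gt (Real.sqrt_pos.2 hsa)
  have hsb' : Real.sqrt (1 - Rp b x Z ^ 2) ≠ 0 := ne_of_gt (Real.sqrt_pos.2 hsb)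
  conv_lhs => rw [Rp]
  rw [inner_resid_sup Z x a b hx, norm_resid_sup Z x a ha hx, norm_resid_sup Z x b hb hx]
  set sa := Real.sqrt (1 - Rp a x Z ^ 2) with hsadef
  set sb := Real.sqrt (1 - Rp b x Z ^ 2) with hsbdef
  simp only [Rp]
  field_simp

lemma key (b r1 r2 r3 : ℝ) (hb : 0 ≤ b)
    (hA : 0 < 1 - r1^2) (hB : 0 < 1 - r2^2) (hC : 0 < 1 - r3^2)
    (hrho : 0 < 1 - ((r3 - r1*r2)/(Real.sqrt (1-r1^2) * Real.sqrt (1-r2^2)))^2)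
    (hE : 0 < 1 - (1+b)*r2^2) :
    (Real.sqrt b * (r1 / Real.sqrt (1-r1^2)) -
       ((r3 - r1*r2)/(Real.sqrt (1-r1^2)*Real.sqrt (1-r2^2))) *
         (Real.sqrt b * (r2 / Real.sqrt (1-r2^2)))) /
      (Real.sqrt (1 - ((r3 - r1*r2)/(Real.sqrt (1-r1^2)*Real.sqrt (1-r2^2)))^2) *
       Real.sqrt (1 - (Real.sqrt b * (r2 / Real.sqrt (1-r2^2)))^2))
    = Real.sqrt b *
        (((r1 - r3*r2)/(Real.sqrt (1-r3^2)*Real.sqrt (1-r2^2))) /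
          Real.sqrt (1 - ((r1 - r3*r2)/(Real.sqrt (1-r3^2)*Real.sqrt (1-r2^2)))^2)) /
        Real.sqrt (1 - (1+b)*r2^2) := by
  set sA := Real.sqrt (1-r1^2) with hsAdef
  set sB := Real.sqrt (1-r2^2) with hsBdef
  set sC := Real.sqrt (1-r3^2) with hsCdef
  have hsA : 0 < sA := Real.sqrt_pos.2 hA
  have hsB : 0 < sB := Real.sqrt_pos.2 hB
  have hsC : 0 < sC := Real.sqrt_pos.2 hC
  have hsA2 : sA^2 = 1-r1^2 := Real.sq_sqrt hA.le
  have hsB2 : sB^2 = 1-r2^2 := Real.sq_sqrt hB.le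
  have hsC2 : sC^2 = 1-r3^2 := Real.sq_sqrt hC.le
  have hrho2 : ((r3 - r1*r2)/(sA*sB))^2 = (r3-r1*r2)^2/((1-r1^2)*(1-r2^2)) := by
    rw [div_pow, mul_pow, hsA2, hsB2]
  have hD : 0 < (1-r1^2)*(1-r2^2) - (r3-r1*r2)^2 := by
    rw [hrho2] at hrho
    have h1 : (r3-r1*r2)^2/((1-r1^2)*(1-r2^2)) < 1 := by linarith
    have := (div_lt_one (by positivity)).1 h1
    linarith
  set D := (1-r1^2)*(1-r2^2) - (r3-r1*r2)^2 with hDdef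
  have hsD : 0 < Real.sqrt D := Real.sqrt_pos.2 hD
  have hsE : 0 < Real.sqrt (1-(1+b)*r2^2) := Real.sqrt_pos.2 hE
  have s1 : Real.sqrt (1 - ((r3 - r1*r2)/(sA*sB))^2) = Real.sqrt D / (sA*sB) := by
    rw [hrho2]
    have h2 : 1 - (r3-r1*r2)^2/((1-r1^2)*(1-r2^2)) = D/((1-r1^2)*(1-r2^2)) := by
      field_simp
      exact hDdef.symm
    rw [h2, Real.sqrt_div hD.le, Real.sqrt_mul hA.le, ← hsAdef, ← hsBdef]
  have s2 : Real.sqrt (1 - (Real.sqrt b * (r2/sB))^2) = Real.sqrt (1-(1+b)*r2^2) / sB := by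
    have h3 : (Real.sqrt b * (r2/sB))^2 = b*r2^2/(1-r2^2) := by
      rw [mul_pow, div_pow, Real.sq_sqrt hb, hsB2]
      ring
    have h4 : 1 - b*r2^2/(1-r2^2) = (1-(1+b)*r2^2)/(1-r2^2) := by
      field_simp
      ring
    rw [h3, h4, Real.sqrt_div hE.le, ← hsBdef]
  have hDC : (1-r3^2)*(1-r2^2) - (r1-r3*r2)^2 = D := by rw [hDdef]; ring
  have s3 : Real.sqrt (1 - ((r1 - r3*r2)/(sC*sB))^2) = Real.sqrt D / (sC*sB) := by
    have h5 : ((r1 - r3*r2)/(sC*sB))^2 = (r1-r3*r2)^2/((1-r3^2)*(1-r2^2)) := by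
      rw [div_pow, mul_pow, hsC2, hsB2]
    have h6 : 1 - (r1-r3*r2)^2/((1-r3^2)*(1-r2^2)) = D/((1-r3^2)*(1-r2^2)) := by
      rw [← hDC]; field_simp
    rw [h5, h6, Real.sqrt_div hD.le, Real.sqrt_mul hC.le, ← hsCdef, ← hsBdef]
  rw [s1, s2, s3]
  field_simp
  rw [hsB2]; ring


/-- rigorous comparison point unconditional on the treatment
(Equation (10)). -/
theorem comparison_point_unconditional [CompleteSpace H]
    (V : Submodule ℝ H) [CompleteSpace V] (b : ℝ) (hb : 0 ≤ b) (y d u x : H)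
    [CompleteSpace ↥(V ⊔ (ℝ ∙ x))] [CompleteSpace ↥(V ⊔ (ℝ ∙ d))]
    [CompleteSpace ↥(V ⊔ (ℝ ∙ x) ⊔ (ℝ ∙ d))]
    (hyV : resid V y ≠ 0) (hdV : resid V d ≠ 0) (hxV : resid V x ≠ 0)
    (hdVx : resid (V ⊔ (ℝ ∙ x)) d ≠ 0) (huVx : resid (V ⊔ (ℝ ∙ x)) u ≠ 0)
    (hyVx : resid (V ⊔ (ℝ ∙ x)) y ≠ 0)
    (hyVd : resid (V ⊔ (ℝ ∙ d)) y ≠ 0) (hxVd : resid (V ⊔ (ℝ ∙ d)) x ≠ 0)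
    (hyVxd : resid (V ⊔ (ℝ ∙ x) ⊔ (ℝ ∙ d)) y ≠ 0)
    (huVxd : resid (V ⊔ (ℝ ∙ x) ⊔ (ℝ ∙ d)) u ≠ 0)
    (hsmall : (1 + b) * Rp d x V ^ 2 < 1)
    (h1 : Rp d u (V ⊔ (ℝ ∙ x)) = Real.sqrt b * fp d x V)
    (h2 : Rp y u (V ⊔ (ℝ ∙ x)) = Real.sqrt b * fp y x V) :
    Rp y u (V ⊔ (ℝ ∙ x) ⊔ (ℝ ∙ d)) =
      Real.sqrt b * fp y x (V ⊔ (ℝ ∙ d)) /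
        Real.sqrt (1 - (1 + b) * Rp d x V ^ 2) := by
  have hA : 0 < 1 - Rp y x V ^ 2 := one_sub_Rp_sq_pos V x y hyV hxV hyVx
  have hB : 0 < 1 - Rp d x V ^ 2 := one_sub_Rp_sq_pos V x d hdV hxV hdVx
  have hC : 0 < 1 - Rp y d V ^ 2 := one_sub_Rp_sq_pos V d y hyV hdV hyVd
  have hB' : 0 < 1 - Rp x d V ^ 2 := by rw [Rp_symm x d V]; exact hB
  have hyd : Rp y d (V ⊔ (ℝ ∙ x)) = (Rp y d V - Rp y x V * Rp d x V) /
      (Real.sqrt (1 - Rp y x V ^ 2) * Real.sqrt (1 - Rp d x V ^ 2)) :=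
    Rp_rec V x y d hyV hdV hxV hA hB
  have hrho : 0 < 1 - Rp y d (V ⊔ (ℝ ∙ x)) ^ 2 :=
    one_sub_Rp_sq_pos (V ⊔ (ℝ ∙ x)) d y hyVx hdVx hyVxd
  have htau : 0 < 1 - Rp u d (V ⊔ (ℝ ∙ x)) ^ 2 :=
    one_sub_Rp_sq_pos (V ⊔ (ℝ ∙ x)) d u huVx hdVx huVxd
  have hmain : Rp y u (V ⊔ (ℝ ∙ x) ⊔ (ℝ ∙ d)) =
      (Rp y u (V ⊔ (ℝ ∙ x)) - Rp y d (V ⊔ (ℝ ∙ x)) * Rp u d (V ⊔ (ℝ ∙ x))) /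
        (Real.sqrt (1 - Rp y d (V ⊔ (ℝ ∙ x)) ^ 2) *
          Real.sqrt (1 - Rp u d (V ⊔ (ℝ ∙ x)) ^ 2)) :=
    Rp_rec (V ⊔ (ℝ ∙ x)) d y u hyVx huVx hdVx hrho htau
  have hyx_d : Rp y x (V ⊔ (ℝ ∙ d)) = (Rp y x V - Rp y d V * Rp x d V) /
      (Real.sqrt (1 - Rp y d V ^ 2) * Real.sqrt (1 - Rp x d V ^ 2)) :=
    Rp_rec V d y x hyV hxV hdV hC hB'
  have hud : Rp u d (V ⊔ (ℝ ∙ x)) = Real.sqrt b * (Rp d x V / Real.sqrt (1 - Rp d x V ^ 2)) := by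
    rw [Rp_symm u d, h1]; rfl
  have h2' : Rp y u (V ⊔ (ℝ ∙ x)) = Real.sqrt b * (Rp y x V / Real.sqrt (1 - Rp y x V ^ 2)) := by
    rw [h2]; rfl
  have hE : 0 < 1 - (1 + b) * Rp d x V ^ 2 := by linarith
  rw [hyd] at hrho
  rw [hmain, h2', hyd, hud]
  simp only [fp]
  rw [hyx_d, Rp_symm x d V]
  exact key b (Rp y x V) (Rp d x V) (Rp y d V) hb hA hB hC hrho hE
end
end

section
/- Translation of the comparative bound on the instrument–confounder correlation: let H be a real Hilbert space, V a complete subspace, and z, u, x ∈ H with all residuals appearing below nonzero. Suppose R_{u∼x|V+span(z)} = 0. Then (a) R_{u∼x|V} = R_{z∼x|V}·R_{z∼u|V}, and (b) R_{z∼u|V+span(x)} = R_{z∼u|V}·√(1 − R²_{z∼x|V}) / √(1 − R²_{z∼x|V}·R²_{z∼u|V}). -/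
/-!
R²-calculus in real Hilbert spaces (Freidling & Zhao, "Optimization-based
Sensitivity Analysis for Unmeasured Confounding using Partial Correlations").
-/

noncomputable section

open Submodule RealInnerProductSpace

variable {H : Type*} [NormedAddCommGroup H] [InnerProductSpace ℝ H]

lemma resid_inner_left (M : Submodule ℝ H) [HasOrthogonalProjection M] (h : H)
    {p : H} (hp : p ∈ M) : ⟪resid M h, p⟫ = 0 :=
  starProjection_inner_eq_zero h p hp

/-- Recursion for residuals: projecting onto `V ⊔ span w` corresponds to one more
Gram–Schmidt step. -/
lemma resid_sup_eq (V : Submodule ℝ H) [HasOrthogonalProjection V] (w : H)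
    [HasOrthogonalProjection (V ⊔ (ℝ ∙ w))] (hw : resid V w ≠ 0) (h : H) :
    resid (V ⊔ (ℝ ∙ w)) h =
      resid V h - (⟪resid V h, resid V w⟫ / ‖resid V w‖ ^ 2) • resid V w := by
  have hwn0 : ‖resid V w‖ ≠ 0 := norm_ne_zero_iff.2 hw
  have hwn : ‖resid V w‖ ^ 2 ≠ 0 := pow_ne_zero _ hwn0
  set w' := resid V w with hw'
  set c : ℝ := ⟪resid V h, w'⟫ / ‖w'‖ ^ 2 with hc
  have hmem : ((orthogonalProjection V h : H) + c • w') ∈ V ⊔ (ℝ ∙ w) := by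
    refine add_mem (mem_sup_left (coe_mem _)) ?_
    have : w' = w - (orthogonalProjection V w : H) := rfl
    rw [this, smul_sub]
    exact sub_mem (mem_sup_right (smul_mem _ _ (mem_span_singleton_self w)))
      (mem_sup_left (smul_mem _ _ (coe_mem _)))
  have hperpV : ∀ p ∈ V, ⟪h - ((orthogonalProjection V h : H) + c • w'), p⟫ = 0 := by
    intro p hp
    have e1 : ⟪resid V h, p⟫ = 0 := resid_inner_left V h hp
    have e2 : ⟪w', p⟫ = 0 := resid_inner_left V w hp
    have : h - ((orthogonalProjection V h : H) + c • w') = resid V h - c • w' := by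
      simp [resid]; abel
    rw [this, inner_sub_left, inner_smul_left, e1, e2]; ring
  have hperpw : ⟪h - ((orthogonalProjection V h : H) + c • w'), w⟫ = 0 := by
    have hsplit : w = w' + (orthogonalProjection V w : H) := by simp [hw', resid]
    have e2 : ⟪h - ((orthogonalProjection V h : H) + c • w'), (orthogonalProjection V w : H)⟫ = 0 :=
      hperpV _ (coe_mem _)
    have hrw : h - ((orthogonalProjection V h : H) + c • w') = resid V h - c • w' := by
      simp [resid]; abel
    rw [hsplit, inner_add_right, e2, hrw, inner_sub_left, inner_smul_left,
      real_inner_self_eq_norm_sq]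
    rw [RCLike.conj_to_real, add_zero, hc, div_mul_cancel₀ _ hwn, sub_self]
  have key : (orthogonalProjection (V ⊔ (ℝ ∙ w)) h : H) =
      (orthogonalProjection V h : H) + c • w' := by
    apply eq_starProjection_of_mem_of_inner_eq_zero hmem
    intro q hq
    obtain ⟨v, hv, t, ht, rfl⟩ := mem_sup.1 hq
    obtain ⟨s, rfl⟩ := mem_span_singleton.1 ht
    rw [inner_add_right, hperpV v hv, inner_smul_right, hperpw]
    ring
  show h - _ = _
  rw [key]
  simp [resid]; abel

lemma gen1_aux (A B NZ NU NX : ℝ) (h1 : NZ ≠ 0) (h2 : NU ≠ 0) (h3 : NX ≠ 0) :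
    A * B / NZ ^ 2 / (NU * NX) = A / (NZ * NX) * (B / (NZ * NU)) := by
  field_simp

lemma gen2_aux (B NZ NU NX SS ST : ℝ) (h1 : NZ ≠ 0) (h2 : NU ≠ 0) (h3 : NX ≠ 0)
    (h4 : SS ≠ 0) (h5 : ST ≠ 0) :
    B * SS ^ 2 / (NZ ^ 2 * NX ^ 2) / (SS / NX * (ST / (NZ ^ 2 * NX))) =
      B / (NZ * NU) * (SS / (NZ * NX)) / (ST / (NZ ^ 2 * NX * NU)) := by
  field_simp

lemma sqrt_div_sq {f d : ℝ} (hf : 0 ≤ f) (hd : 0 < d) :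
    Real.sqrt (f / d ^ 2) = Real.sqrt f / d := by
  rw [Real.sqrt_div hf, Real.sqrt_sq hd.le]

/-- translation of the comparative bound on the instrument–confounder
correlation. -/
theorem instrument_confounder_bound_translation [CompleteSpace H]
    (V : Submodule ℝ H) [CompleteSpace V] (z u x : H)
    [CompleteSpace ↥(V ⊔ (ℝ ∙ z))] [CompleteSpace ↥(V ⊔ (ℝ ∙ x))]
    (hz : resid V z ≠ 0) (hu : resid V u ≠ 0) (hx : resid V x ≠ 0)
    (hu2 : resid (V ⊔ (ℝ ∙ z)) u ≠ 0) (hx2 : resid (V ⊔ (ℝ ∙ z)) x ≠ 0)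
    (hz3 : resid (V ⊔ (ℝ ∙ x)) z ≠ 0) (hu3 : resid (V ⊔ (ℝ ∙ x)) u ≠ 0)
    (h0 : Rp u x (V ⊔ (ℝ ∙ z)) = 0) :
    Rp u x V = Rp z x V * Rp z u V ∧
    Rp z u (V ⊔ (ℝ ∙ x)) =
      Rp z u V * Real.sqrt (1 - Rp z x V ^ 2) /
        Real.sqrt (1 - Rp z x V ^ 2 * Rp z u V ^ 2) := by
  set z' := resid V z with hz'
  set u' := resid V u with hu'
  set x' := resid V x with hx'
  set a : ℝ := ⟪z', x'⟫ with ha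
  set b : ℝ := ⟪z', u'⟫ with hb
  set cc : ℝ := ⟪u', x'⟫ with hcc
  have hnz : (0:ℝ) < ‖z'‖ := norm_pos_iff.2 hz
  have hnu : (0:ℝ) < ‖u'‖ := norm_pos_iff.2 hu
  have hnx : (0:ℝ) < ‖x'‖ := norm_pos_iff.2 hx
  set nz := ‖z'‖
  set nu := ‖u'‖
  set nx := ‖x'‖
  -- residuals after adding z
  have ru2 : resid (V ⊔ (ℝ ∙ z)) u = u' - (b / nz ^ 2) • z' := by
    rw [resid_sup_eq V z hz u, real_inner_comm, ← hb]
  have rx2 : resid (V ⊔ (ℝ ∙ z)) x = x' - (a / nz ^ 2) • z' := by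
    rw [resid_sup_eq V z hz x, real_inner_comm, ← ha]
  -- residuals after adding x
  have rz3 : resid (V ⊔ (ℝ ∙ x)) z = z' - (a / nx ^ 2) • x' := by
    rw [resid_sup_eq V x hx z, ← ha]
  have ru3 : resid (V ⊔ (ℝ ∙ x)) u = u' - (cc / nx ^ 2) • x' := by
    rw [resid_sup_eq V x hx u, ← hcc]
  have hzz : ⟪z', z'⟫ = nz ^ 2 := real_inner_self_eq_norm_sq z'
  have hxx : ⟪x', x'⟫ = nx ^ 2 := real_inner_self_eq_norm_sq x'
  have hxz : ⟪x', z'⟫ = a := by rw [real_inner_comm, ha]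
  have huz : ⟪u', z'⟫ = b := by rw [real_inner_comm, hb]
  have hxu : ⟪x', u'⟫ = cc := by rw [real_inner_comm, hcc]
  -- the orthogonality hypothesis gives cc * nz^2 = a * b
  have hkey : cc = a * b / nz ^ 2 := by
    have hnum : ⟪resid (V ⊔ (ℝ ∙ z)) u, resid (V ⊔ (ℝ ∙ z)) x⟫ = 0 := by
      have hd : ‖resid (V ⊔ (ℝ ∙ z)) u‖ * ‖resid (V ⊔ (ℝ ∙ z)) x‖ ≠ 0 :=
        mul_ne_zero (norm_ne_zero_iff.2 hu2) (norm_ne_zero_iff.2 hx2)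
      have := h0
      rw [Rp, div_eq_zero_iff] at this
      tauto
    rw [ru2, rx2] at hnum
    simp only [inner_sub_left, inner_sub_right, inner_smul_left, inner_smul_right,
      hxz, huz, ← ha, ← hb, ← hcc, hzz, RCLike.conj_to_real] at hnum
    have hnz2 : nz ^ 2 ≠ 0 := by positivity
    field_simp at hnum ⊢
    linarith
  constructor
  · -- part (a)
    show cc / (nu * nx) = a / (nz * nx) * (b / (nz * nu))
    rw [hkey]
    exact gen1_aux a b nz nu nx hnz.ne' hnu.ne' hnx.ne'
  · -- part (b)
    have hA : ‖resid (V ⊔ (ℝ ∙ x)) z‖ ^ 2 = nz ^ 2 - a ^ 2 / nx ^ 2 := by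
      rw [← real_inner_self_eq_norm_sq, rz3]
      simp only [inner_sub_left, inner_sub_right, inner_smul_left, inner_smul_right,
        hxz, ← ha, hzz, hxx, RCLike.conj_to_real]
      field_simp; ring
    have hB : ‖resid (V ⊔ (ℝ ∙ x)) u‖ ^ 2 = nu ^ 2 - cc ^ 2 / nx ^ 2 := by
      rw [← real_inner_self_eq_norm_sq, ru3]
      simp only [inner_sub_left, inner_sub_right, inner_smul_left, inner_smul_right,
        hxu, ← hcc, hxx, RCLike.conj_to_real]
      rw [real_inner_self_eq_norm_sq]
      field_simp; ring
    have hN : ⟪resid (V ⊔ (ℝ ∙ x)) z, resid (V ⊔ (ℝ ∙ x)) u⟫ = b - a * cc / nx ^ 2 := by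
      rw [rz3, ru3]
      simp only [inner_sub_left, inner_sub_right, inner_smul_left, inner_smul_right,
        hxz, hxu, ← ha, ← hb, ← hcc, hxx, RCLike.conj_to_real]
      field_simp
      try ring
    -- positivity of the key quantities
    have hApos : (0:ℝ) < nz ^ 2 - a ^ 2 / nx ^ 2 := by
      rw [← hA]; exact pow_pos (norm_pos_iff.2 hz3) 2
    have hBpos : (0:ℝ) < nu ^ 2 - cc ^ 2 / nx ^ 2 := by
      rw [← hB]; exact pow_pos (norm_pos_iff.2 hu3) 2
    set S : ℝ := nz ^ 2 * nx ^ 2 - a ^ 2 with hSdef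
    set T : ℝ := nz ^ 2 * nz ^ 2 * nx ^ 2 * nu ^ 2 - a ^ 2 * b ^ 2 with hTdef
    have hS : (0:ℝ) < S := by
      have := mul_pos hApos (pow_pos hnx 2)
      rw [hSdef]; rw [sub_mul, div_mul_cancel₀] at this
      · linarith
      · positivity
    have hT : (0:ℝ) < T := by
      have h1 : (0:ℝ) < (nu ^ 2 - cc ^ 2 / nx ^ 2) * (nz ^ 2 * nz ^ 2 * nx ^ 2) := by positivity
      rw [hTdef]
      have : (nu ^ 2 - cc ^ 2 / nx ^ 2) * (nz ^ 2 * nz ^ 2 * nx ^ 2) =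
          nz ^ 2 * nz ^ 2 * nx ^ 2 * nu ^ 2 - a ^ 2 * b ^ 2 := by
        rw [hkey]; field_simp
      linarith [this ▸ h1]
    set sS := Real.sqrt S with hsSdef
    set sT := Real.sqrt T with hsTdef
    have hsS : (0:ℝ) < sS := Real.sqrt_pos.2 hS
    have hsT : (0:ℝ) < sT := Real.sqrt_pos.2 hT
    have hsS2 : sS ^ 2 = S := Real.sq_sqrt hS.le
    have hsT2 : sT ^ 2 = T := Real.sq_sqrt hT.le
    -- rewrite all four square roots
    have e1 : ‖resid (V ⊔ (ℝ ∙ x)) z‖ = sS / nx := by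
      rw [← Real.sqrt_sq (norm_nonneg _), hA,
        show nz ^ 2 - a ^ 2 / nx ^ 2 = S / nx ^ 2 by field_simp [hSdef]; exact hSdef.symm,
        hsSdef]
      exact sqrt_div_sq hS.le hnx
    have e2 : ‖resid (V ⊔ (ℝ ∙ x)) u‖ = sT / (nz ^ 2 * nx) := by
      rw [← Real.sqrt_sq (norm_nonneg _), hB, hkey,
        show nu ^ 2 - (a * b / nz ^ 2) ^ 2 / nx ^ 2 = T / (nz ^ 2 * nx) ^ 2 by
          field_simp [hTdef]; ring,
        hsTdef]
      exact sqrt_div_sq hT.le (by positivity)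
    have e3 : Real.sqrt (1 - (a / (nz * nx)) ^ 2) = sS / (nz * nx) := by
      rw [show 1 - (a / (nz * nx)) ^ 2 = S / (nz * nx) ^ 2 by
          field_simp [hSdef]; ring, hsSdef]
      exact sqrt_div_sq hS.le (by positivity)
    have e4 : Real.sqrt (1 - (a / (nz * nx)) ^ 2 * (b / (nz * nu)) ^ 2) =
        sT / (nz ^ 2 * nx * nu) := by
      rw [show 1 - (a / (nz * nx)) ^ 2 * (b / (nz * nu)) ^ 2 = T / (nz ^ 2 * nx * nu) ^ 2 by
          field_simp [hTdef]; ring, hsTdef]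
      exact sqrt_div_sq hT.le (by positivity)
    show ⟪resid (V ⊔ (ℝ ∙ x)) z, resid (V ⊔ (ℝ ∙ x)) u⟫ /
        (‖resid (V ⊔ (ℝ ∙ x)) z‖ * ‖resid (V ⊔ (ℝ ∙ x)) u‖) =
      b / (nz * nu) * Real.sqrt (1 - (a / (nz * nx)) ^ 2) /
        Real.sqrt (1 - (a / (nz * nx)) ^ 2 * (b / (nz * nu)) ^ 2)
    rw [hN, e1, e2, e3, e4, hkey]
    have hnum : b - a * (a * b / nz ^ 2) / nx ^ 2 = b * sS ^ 2 / (nz ^ 2 * nx ^ 2) := by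
      rw [hsS2, hSdef]; field_simp
    rw [hnum]
    exact gen2_aux b nz nu nx sS sT hnz.ne' hnu.ne' hnx.ne' hsS.ne' hsT.ne'
end
end
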